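/- arXiv:1812.11706 — 2 statements merged into one kernel-verified Lean document; each statement's English description precedes it below -/
import Mathlib

section
/- Let A : X × K → L(E,H) be continuous, where X ⊂ H and K ⊂ E are compact, and assume A(u,η) has dense image in H for every (u,η). Then for every ε > 0 there exist M ∈ ℕ, C > 0, and a continuous map R_ε : X × K → L(H,E) such that for all (u,η): the image of R_ε(u,η) lies in the span E_M of the first M basis vectors, ‖R_ε(u,η)‖ ≤ C, and ‖A(u,η) R_ε(u,η) f − f‖_H ≤ ε ‖f‖_V for all f ∈ V. -/
open ContinuousLinearMap
set_option maxHeartbeats 1000000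

private lemma convex_bound {F ι : Type*} [NormedAddCommGroup F] [NormedSpace ℝ F]
    (tb : Finset ι) (w : ι → ℝ) (v : ι → F) (c : ℝ)
    (hw : ∀ i ∈ tb, 0 ≤ w i) (hg : 0 < ∑ i ∈ tb, w i)
    (hv : ∀ i ∈ tb, w i ≠ 0 → ‖v i‖ ≤ c) :
    ‖(∑ i ∈ tb, w i)⁻¹ • ∑ i ∈ tb, w i • v i‖ ≤ c := by
  have hsum : ‖∑ i ∈ tb, w i • v i‖ ≤ ∑ i ∈ tb, w i * c := by
    refine (norm_sum_le _ _).trans (Finset.sum_le_sum fun i hi => ?_)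
    rw [norm_smul, Real.norm_eq_abs, abs_of_nonneg (hw i hi)]
    rcases eq_or_ne (w i) 0 with h | h
    · simp [h]
    · exact mul_le_mul_of_nonneg_left (hv i hi h) (hw i hi)
  rw [norm_smul, norm_inv, Real.norm_eq_abs, abs_of_pos hg]
  calc (∑ i ∈ tb, w i)⁻¹ * ‖∑ i ∈ tb, w i • v i‖
      ≤ (∑ i ∈ tb, w i)⁻¹ * ((∑ i ∈ tb, w i) * c) := by
        refine mul_le_mul_of_nonneg_left ?_ (by positivity)
        rw [Finset.sum_mul]; exact hsum
    _ = c := by field_simp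

/-- approximate right inverses, continuous in parameters, with finite
dimensional range. `ι : V → H` is the compact dense embedding of the Banach space `V`
into `H`, `e` is a Hilbert basis of `E`, and `E_M` is the span of `e 0, …, e (M-1)`. -/
theorem stmt_6 {H E V : Type*}
    [NormedAddCommGroup H] [InnerProductSpace ℝ H] [CompleteSpace H]
    [SecondCountableTopology H]
    [NormedAddCommGroup E] [InnerProductSpace ℝ E] [CompleteSpace E]
    [SecondCountableTopology E]
    [NormedAddCommGroup V] [NormedSpace ℝ V] [CompleteSpace V]
    (ι : V →L[ℝ] H) (hι_dense : DenseRange ι) (hι_compact : IsCompactOperator ι)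
    (e : HilbertBasis ℕ ℝ E)
    (X : Set H) (K : Set E) (hX : IsCompact X) (hK : IsCompact K)
    (A : H × E → E →L[ℝ] H)
    (hAcont : ContinuousOn A (X ×ˢ K))
    (hAdense : ∀ u ∈ X, ∀ η ∈ K, DenseRange (A (u, η))) :
    ∀ ε : ℝ, 0 < ε →
      ∃ (M : ℕ) (C : ℝ), 0 < C ∧
        ∃ Rε : H × E → H →L[ℝ] E,
          ContinuousOn Rε (X ×ˢ K) ∧
          (∀ u ∈ X, ∀ η ∈ K,
            (∀ f : H, Rε (u, η) f ∈
                Submodule.span ℝ (e '' {j : ℕ | j < M})) ∧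
            ‖Rε (u, η)‖ ≤ C ∧
            (∀ f : V, ‖A (u, η) (Rε (u, η) (ι f)) - ι f‖ ≤ ε * ‖f‖)) := by
  classical
  intro ε hε
  set s : Set (H × E) := X ×ˢ K with hs_def
  have hs : IsCompact s := hX.prod hK
  rcases s.eq_empty_or_nonempty with hempty | hne
  · -- degenerate case: the parameter set is empty
    refine ⟨0, 1, one_pos, 0, continuousOn_const, fun u hu η hη => ?_⟩
    exfalso
    have : (u, η) ∈ s := Set.mk_mem_prod hu hη
    rw [hempty] at this
    exact this
  -- a uniform bound on ‖A q‖ over s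
  obtain ⟨q₀, hq₀s, hq₀max⟩ := hs.exists_isMaxOn hne (hAcont.norm)
  set CA : ℝ := ‖A q₀‖ + 1 with hCA_def
  have hCA : 0 < CA := by positivity
  have hAle : ∀ q ∈ s, ‖A q‖ ≤ CA := fun q hq =>
    (hq₀max hq).trans (le_add_of_nonneg_right zero_le_one)
  -- the compact operator gives a finite-dimensional almost-containing subspace W
  obtain ⟨T, hTc, hTmem⟩ := hι_compact
  obtain ⟨r, hr, hrball⟩ := Metric.mem_nhds_iff.1 hTmem
  obtain ⟨t, ht_fin, ht_cover⟩ := Metric.totallyBounded_iff.1 hTc.totallyBounded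
    (ε * r / 4) (by positivity)
  have : FiniteDimensional ℝ (Submodule.span ℝ t) := FiniteDimensional.span_of_finite ℝ ht_fin
  set W := Submodule.span ℝ t with hW_def
  set P' : H →L[ℝ] H := W.subtypeL.comp (W.orthogonalProjectionOnto) with hP'_def
  have hmin : ∀ (u w : H), w ∈ W → ‖u - P' u‖ ≤ ‖u - w‖ := by
    intro u w hw
    have h1 : ‖u - P' u‖ = ⨅ x : W, ‖u - x‖ := Submodule.starProjection_minimal u
    rw [h1]
    exact ciInf_le_of_le ⟨0, by rintro x ⟨y, rfl⟩; exact norm_nonneg _⟩ ⟨w, hw⟩ le_rfl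
  -- W approximates ι f up to (ε/2)‖f‖
  have hWapprox : ∀ f : V, ‖ι f - P' (ι f)‖ ≤ ε / 2 * ‖f‖ := by
    intro f
    rcases eq_or_ne f 0 with rfl | hf0
    · simp
    have hfpos : (0:ℝ) < ‖f‖ := norm_pos_iff.2 hf0
    set g : V := (r / (2 * ‖f‖)) • f with hg_def
    have hgnorm : ‖g‖ = r / 2 := by
      rw [hg_def, norm_smul, Real.norm_eq_abs, abs_of_pos (by positivity)]
      field_simp
    have hgball : g ∈ Metric.ball (0 : V) r := by
      simp only [Metric.mem_ball, dist_zero_right, hgnorm]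
      linarith
    have hgT : ι g ∈ T := hrball hgball
    obtain ⟨y, hyt, hy⟩ := Set.mem_iUnion₂.1 (ht_cover hgT)
    rw [Metric.mem_ball, dist_eq_norm] at hy
    set w : H := (2 * ‖f‖ / r) • y with hw_def
    have hwW : w ∈ W := Submodule.smul_mem _ _ (Submodule.subset_span hyt)
    have hιf : ι f = (2 * ‖f‖ / r) • ι g := by
      rw [hg_def, map_smul, smul_smul]
      rw [show 2 * ‖f‖ / r * (r / (2 * ‖f‖)) = 1 by field_simp]
      rw [one_smul]
    have hdist : ‖ι f - w‖ ≤ ε / 2 * ‖f‖ := by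
      rw [hιf, hw_def, ← smul_sub, norm_smul, Real.norm_eq_abs, abs_of_pos (by positivity)]
      calc 2 * ‖f‖ / r * ‖ι g - y‖ ≤ 2 * ‖f‖ / r * (ε * r / 4) := by
            exact mul_le_mul_of_nonneg_left hy.le (by positivity)
        _ = ε / 2 * ‖f‖ := by field_simp; ring
    exact (hmin _ w hwW).trans hdist
  -- the orthonormal basis of W
  set n := Module.finrank ℝ W with hn_def
  set b : OrthonormalBasis (Fin n) ℝ W := stdOrthonormalBasis ℝ W with hb_def
  have hbnorm : ∀ k, ‖(b k : H)‖ = 1 := fun k => by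
    rw [Submodule.norm_coe]; exact b.orthonormal.1 k
  have hPsum : ∀ h : H, P' h = ∑ k, (inner ℝ ((b k : H)) h : ℝ) • (b k : H) := by
    intro h
    have := b.orthogonalProjectionOnto_apply_eq_sum h
    calc P' h = ((W.orthogonalProjectionOnto h : W) : H) := rfl
      _ = _ := by rw [this]; push_cast; rfl
  set κ : ℝ := ε / (2 * (‖ι‖ + 1)) with hκ_def
  have hκ : 0 < κ := by positivity
  set δ₁ : ℝ := κ / (2 * (n + 1)) with hδ₁_def
  have hδ₁ : 0 < δ₁ := by positivity
  -- approximate preimages of basis vectors, truncated to finitely many e j's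
  have hξ_exists : ∀ p ∈ s, ∀ x : H, ∃ (ξ : E) (M : ℕ),
      ξ ∈ Submodule.span ℝ (e '' {j : ℕ | j < M}) ∧ ‖A p ξ - x‖ ≤ δ₁ := by
    intro p hp x
    have hdr : DenseRange (A p) := by
      have := hAdense p.1 hp.1 p.2 hp.2
      rwa [Prod.mk.eta] at this
    obtain ⟨ξ', hξ'⟩ := hdr.exists_dist_lt x (half_pos hδ₁)
    rw [dist_comm, dist_eq_norm] at hξ'
    have hsum := (e.hasSum_repr ξ').tendsto_sum_nat
    obtain ⟨N, hN⟩ : ∃ N : ℕ,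
        ‖(∑ j ∈ Finset.range N, e.repr ξ' j • e j) - ξ'‖ < δ₁ / (2 * CA) := by
      obtain ⟨N0, hN0⟩ := Metric.tendsto_atTop.1 hsum (δ₁ / (2 * CA)) (by positivity)
      exact ⟨N0, by simpa [dist_eq_norm] using hN0 N0 le_rfl⟩
    refine ⟨∑ j ∈ Finset.range N, e.repr ξ' j • e j, N, ?_, ?_⟩
    · exact Submodule.sum_mem _ fun j hj => Submodule.smul_mem _ _
        (Submodule.subset_span ⟨j, Finset.mem_range.1 hj, rfl⟩)
    · have h1 : ‖A p ((∑ j ∈ Finset.range N, e.repr ξ' j • e j) - ξ')‖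
          ≤ CA * (δ₁ / (2 * CA)) :=
        ((A p).le_opNorm _).trans
          (mul_le_mul (hAle p hp) hN.le (norm_nonneg _) hCA.le)
      have heq : A p (∑ j ∈ Finset.range N, e.repr ξ' j • e j) - x
          = A p ((∑ j ∈ Finset.range N, e.repr ξ' j • e j) - ξ') + (A p ξ' - x) := by
        rw [map_sub]; abel
      rw [heq]
      calc ‖_ + _‖ ≤ _ + _ := norm_add_le _ _
        _ ≤ CA * (δ₁ / (2 * CA)) + δ₁ / 2 := add_le_add h1 hξ'.le
        _ = δ₁ / 2 + δ₁ / 2 := by congr 1; field_simp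
        _ = δ₁ := add_halves δ₁
  -- the local approximate right inverses and their neighborhoods
  have claim : ∀ p : H × E, ∃ (S : H →L[ℝ] E) (Mp : ℕ) (O : Set (H × E)), p ∈ s →
      (IsOpen O ∧ p ∈ O ∧
        (∀ h : H, S h ∈ Submodule.span ℝ (e '' {j : ℕ | j < Mp})) ∧
        (∀ q ∈ O ∩ s, ∀ h : H, ‖A q (S h) - P' h‖ ≤ κ * ‖h‖)) := by
    intro p
    by_cases hp : p ∈ s
    swap
    · exact ⟨0, 0, ∅, fun h => absurd h hp⟩
    choose ξ Mk hξmem hξbound using fun k : Fin n => hξ_exists p hp (b k : H)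
    obtain ⟨S, hS_def⟩ : ∃ S : H →L[ℝ] E,
        S = ∑ k, (innerSL ℝ ((b k : H))).smulRight (ξ k) := ⟨_, rfl⟩
    have hSapp : ∀ h : H, S h = ∑ k, (inner ℝ ((b k : H)) h : ℝ) • ξ k := by
      intro h
      simp [hS_def, ContinuousLinearMap.sum_apply]
    set Mp : ℕ := Finset.univ.sup Mk with hMp_def
    have hSspan : ∀ h : H, S h ∈ Submodule.span ℝ (e '' {j : ℕ | j < Mp}) := by
      intro h
      rw [hSapp]
      refine Submodule.sum_mem _ fun k _ => Submodule.smul_mem _ _ ?_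
      refine Submodule.span_mono (Set.image_mono ?_) (hξmem k)
      intro j hj
      exact hj.trans_le (Finset.le_sup (f := Mk) (Finset.mem_univ k))
    -- pointwise estimate at p
    have hpt : ∀ h : H, ‖A p (S h) - P' h‖ ≤ κ / 2 * ‖h‖ := by
      intro h
      have heq : A p (S h) - P' h
          = ∑ k, (inner ℝ ((b k : H)) h : ℝ) • (A p (ξ k) - (b k : H)) := by
        rw [hSapp, map_sum, hPsum, ← Finset.sum_sub_distrib]
        congr 1
        ext k
        rw [map_smul, smul_sub]
      rw [heq]
      calc ‖∑ k, (inner ℝ ((b k : H)) h : ℝ) • (A p (ξ k) - (b k : H))‖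
          ≤ ∑ k : Fin n, ‖(inner ℝ ((b k : H)) h : ℝ) • (A p (ξ k) - (b k : H))‖ :=
            norm_sum_le _ _
        _ ≤ ∑ _k : Fin n, ‖h‖ * δ₁ := by
            refine Finset.sum_le_sum fun k _ => ?_
            rw [norm_smul, Real.norm_eq_abs]
            refine mul_le_mul ?_ (hξbound k) (norm_nonneg _) (norm_nonneg _)
            calc |(inner ℝ ((b k : H)) h : ℝ)| ≤ ‖(b k : H)‖ * ‖h‖ := abs_real_inner_le_norm _ _
              _ = ‖h‖ := by rw [hbnorm k, one_mul]
        _ = n * (‖h‖ * δ₁) := by simp [Finset.sum_const]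
        _ ≤ κ / 2 * ‖h‖ := by
            rw [hδ₁_def]
            rw [show (n : ℝ) * (‖h‖ * (κ / (2 * (n + 1)))) = κ / 2 * ‖h‖ * (n / (n + 1)) by
              field_simp]
            refine mul_le_of_le_one_right (by positivity) ?_
            rw [div_le_one (by positivity)]
            linarith
    -- the neighborhood where A is close to A p
    obtain ⟨d, hd_def⟩ : ∃ d : ℝ, d = κ / (2 * (1 + ‖S‖)) := ⟨_, rfl⟩
    have hd : 0 < d := by rw [hd_def]; positivity
    have hmemO : A ⁻¹' Metric.ball (A p) d ∈ nhdsWithin p s :=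
      hAcont p hp (Metric.ball_mem_nhds _ hd)
    obtain ⟨O, hOopen, hpO, hOsub⟩ := mem_nhdsWithin.1 hmemO
    refine ⟨S, Mp, O, fun _ => ⟨hOopen, hpO, hSspan, ?_⟩⟩
    intro q hq h
    have hqball : A q ∈ Metric.ball (A p) d := hOsub hq
    have hqd : ‖A q - A p‖ ≤ d := by
      rw [← dist_eq_norm]
      exact (Metric.mem_ball.1 hqball).le
    have h1 : ‖A q (S h) - A p (S h)‖ ≤ κ / 2 * ‖h‖ := by
      have : A q (S h) - A p (S h) = (A q - A p) (S h) := by simp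
      rw [this]
      calc ‖(A q - A p) (S h)‖ ≤ ‖A q - A p‖ * ‖S h‖ := (A q - A p).le_opNorm _
        _ ≤ d * (‖S‖ * ‖h‖) :=
            mul_le_mul hqd (S.le_opNorm h) (norm_nonneg _) hd.le
        _ ≤ κ / 2 * ‖h‖ := by
            have hS1 : (0:ℝ) < 1 + ‖S‖ := by positivity
            have h2 : d * (1 + ‖S‖) = κ / 2 := by
              rw [hd_def, div_mul_eq_mul_div, div_eq_div_iff (by positivity) two_ne_zero]
              ring
            have hdS : d * ‖S‖ ≤ κ / 2 := by nlinarith [hd.le, norm_nonneg S]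
            calc d * (‖S‖ * ‖h‖) = d * ‖S‖ * ‖h‖ := by ring
              _ ≤ κ / 2 * ‖h‖ := mul_le_mul_of_nonneg_right hdS (norm_nonneg h)
    calc ‖A q (S h) - P' h‖
        = ‖(A q (S h) - A p (S h)) + (A p (S h) - P' h)‖ := by congr 1; abel
      _ ≤ ‖A q (S h) - A p (S h)‖ + ‖A p (S h) - P' h‖ := norm_add_le _ _
      _ ≤ κ / 2 * ‖h‖ + κ / 2 * ‖h‖ := add_le_add h1 (hpt h)
      _ = κ * ‖h‖ := by ring
  choose S Mp O hO using claim
  -- compactness: finitely many points suffice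
  have hcover : s ⊆ ⋃ p ∈ s, O p := fun q hq =>
    Set.mem_biUnion hq (hO q hq).2.1
  obtain ⟨tb', htb's, htb'fin, htb'cover⟩ :=
    hs.elim_finite_subcover_image (fun p hp => (hO p hp).1) hcover
  set tb : Finset (H × E) := htb'fin.toFinset with htb_def
  have htbs : ∀ p ∈ tb, p ∈ s := fun p hp => htb's (htb'fin.mem_toFinset.1 hp)
  have htbcover : s ⊆ ⋃ p ∈ tb, O p := by
    intro q hq
    obtain ⟨p, hp, hqp⟩ := Set.mem_iUnion₂.1 (htb'cover hq)
    exact Set.mem_biUnion (htb'fin.mem_toFinset.2 hp) hqp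
  -- the partition-of-unity weights
  set ψ : (H × E) → (H × E) → ℝ := fun p q =>
    Metric.infDist q ((O p)ᶜ) + (if ((O p)ᶜ).Nonempty then 0 else 1) with hψ_def
  have hψcont : ∀ p, Continuous (ψ p) := fun p =>
    (Metric.continuous_infDist_pt _).add continuous_const
  have hψnonneg : ∀ p q, 0 ≤ ψ p q := fun p q => by
    have h0 := Metric.infDist_nonneg (x := q) (s := (O p)ᶜ)
    rw [hψ_def]
    dsimp only
    split <;> linarith
  have hψpos : ∀ p ∈ tb, ∀ q ∈ O p, 0 < ψ p q := by
    intro p hptb q hq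
    rw [hψ_def]
    dsimp only
    split
    case isTrue hne' =>
      rw [add_zero]
      refine (IsClosed.notMem_iff_infDist_pos
        (hO p (htbs p hptb)).1.isClosed_compl hne').1 ?_
      exact fun hmem => hmem hq
    case isFalse =>
      have := Metric.infDist_nonneg (x := q) (s := (O p)ᶜ)
      linarith
  have hψmem : ∀ p q, ψ p q ≠ 0 → q ∈ O p := by
    intro p q hne'
    by_contra hq
    apply hne'
    rw [hψ_def]
    dsimp only
    rw [if_pos ⟨q, hq⟩, add_zero]
    exact Metric.infDist_zero_of_mem hq
  -- the glued approximate right inverse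
  set g : (H × E) → ℝ := fun q => ∑ p ∈ tb, ψ p q with hg_def
  have hgpos : ∀ q ∈ s, 0 < g q := by
    intro q hq
    obtain ⟨p, hptb, hqp⟩ := Set.mem_iUnion₂.1 (htbcover hq)
    exact Finset.sum_pos' (fun p' _ => hψnonneg p' q) ⟨p, hptb, hψpos p hptb q hqp⟩
  set R : (H × E) → (H →L[ℝ] E) := fun q => (g q)⁻¹ • ∑ p ∈ tb, ψ p q • S p with hR_def
  have hRapp : ∀ q h, R q h = (g q)⁻¹ • ∑ p ∈ tb, ψ p q • S p h := by
    intro q h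
    simp [hR_def, ContinuousLinearMap.sum_apply]
  -- the global constants
  set Mtot : ℕ := tb.sup Mp with hM_def
  set C : ℝ := (∑ p ∈ tb, ‖S p‖) + 1 with hC_def
  have hC : 0 < C := by positivity
  refine ⟨Mtot, C, hC, R, ?_, ?_⟩
  · -- continuity
    have hgc : Continuous g := continuous_finset_sum _ fun p _ => hψcont p
    have hsumc : Continuous fun q => ∑ p ∈ tb, ψ p q • S p :=
      continuous_finset_sum _ fun p _ => (hψcont p).smul continuous_const
    exact (hgc.continuousOn.inv₀ fun q hq => (hgpos q hq).ne').smul hsumc.continuousOn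
  intro u hu η hη
  have hq : (u, η) ∈ s := Set.mk_mem_prod hu hη
  have hgq := hgpos _ hq
  have hgeq : g (u, η) = ∑ p ∈ tb, ψ p (u, η) := by rw [hg_def]
  have hgqsum : (0:ℝ) < ∑ p ∈ tb, ψ p (u, η) := hgeq ▸ hgq
  -- the key uniform estimate on s
  have hkey : ∀ h : H, ‖A (u, η) (R (u, η) h) - P' h‖ ≤ κ * ‖h‖ := by
    intro h
    have eA : A (u, η) (R (u, η) h)
        = (g (u, η))⁻¹ • ∑ p ∈ tb, ψ p (u, η) • A (u, η) (S p h) := by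
      rw [hRapp, map_smul, map_sum]
      simp_rw [map_smul]
    have e1 : A (u, η) (R (u, η) h) - P' h
        = (g (u, η))⁻¹ • ∑ p ∈ tb, ψ p (u, η) • (A (u, η) (S p h) - P' h) := by
      rw [eA]
      rw [show ∑ p ∈ tb, ψ p (u, η) • (A (u, η) (S p h) - P' h)
          = (∑ p ∈ tb, ψ p (u, η) • A (u, η) (S p h)) - g (u, η) • P' h by
        simp_rw [smul_sub]
        rw [Finset.sum_sub_distrib, ← Finset.sum_smul, hgeq]]
      rw [smul_sub, smul_smul, inv_mul_cancel₀ hgq.ne', one_smul]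
    rw [e1, hgeq]
    have := convex_bound tb (fun p => ψ p (u, η)) (fun p => A (u, η) (S p h) - P' h)
      (κ * ‖h‖) (fun p _ => hψnonneg p (u, η)) hgqsum ?_
    · exact this
    intro p hptb hne'
    have hqO : (u, η) ∈ O p := hψmem p (u, η) hne'
    exact (hO p (htbs p hptb)).2.2.2 (u, η) ⟨hqO, hq⟩ h
  refine ⟨?_, ?_, ?_⟩
  · -- finite-dimensional range
    intro f
    rw [hRapp]
    refine Submodule.smul_mem _ _
      (Submodule.sum_mem _ fun p hptb => Submodule.smul_mem _ _ ?_)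
    refine Submodule.span_mono (Set.image_mono fun j hj =>
      hj.trans_le (Finset.le_sup (f := Mp) hptb)) ((hO p (htbs p hptb)).2.2.1 f)
  · -- uniform bound
    refine opNorm_le_bound _ hC.le fun h => ?_
    rw [hRapp, hgeq]
    refine convex_bound tb (fun p => ψ p (u, η)) (fun p => S p h) (C * ‖h‖)
      (fun p _ => hψnonneg p (u, η)) hgqsum ?_
    intro p hptb _
    calc ‖S p h‖ ≤ ‖S p‖ * ‖h‖ := (S p).le_opNorm h
      _ ≤ C * ‖h‖ := by
          refine mul_le_mul_of_nonneg_right ?_ (norm_nonneg _)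
          rw [hC_def]
          have : ‖S p‖ ≤ ∑ p' ∈ tb, ‖S p'‖ :=
            Finset.single_le_sum (fun p' _ => norm_nonneg (S p')) hptb
          linarith
  · -- the approximation estimate
    intro f
    have h1 := hkey (ι f)
    have h2 := hWapprox f
    have hκι : κ * ‖ι f‖ ≤ ε / 2 * ‖f‖ := by
      calc κ * ‖ι f‖ ≤ κ * ((‖ι‖ + 1) * ‖f‖) := by
            refine mul_le_mul_of_nonneg_left ?_ hκ.le
            calc ‖ι f‖ ≤ ‖ι‖ * ‖f‖ := ι.le_opNorm f
              _ ≤ (‖ι‖ + 1) * ‖f‖ :=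
                  mul_le_mul_of_nonneg_right (by linarith) (norm_nonneg f)
        _ = ε / 2 * ‖f‖ := by rw [hκ_def]; field_simp
    calc ‖A (u, η) (R (u, η) (ι f)) - ι f‖
        = ‖(A (u, η) (R (u, η) (ι f)) - P' (ι f)) + (P' (ι f) - ι f)‖ := by
          congr 1; abel
      _ ≤ ‖A (u, η) (R (u, η) (ι f)) - P' (ι f)‖ + ‖P' (ι f) - ι f‖ := norm_add_le _ _
      _ ≤ κ * ‖ι f‖ + ε / 2 * ‖f‖ := by
          refine add_le_add h1 ?_
          rw [norm_sub_rev]; exact h2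
      _ ≤ ε / 2 * ‖f‖ + ε / 2 * ‖f‖ := add_le_add_left hκι _
      _ = ε * ‖f‖ := by ring
end

section
/- Let ρ : ℝ^M → ℝ be a Lipschitz probability density supported on a compact set, and let Ξ = id + Φ where Φ : ℝ^M → ℝ^M is Lipschitz with Lip(Φ) ≤ 1/2 and sup‖Φ‖ ≤ δ, both bounded by c·d for some d > 0. Then the total variation distance between the measure ρ(v)dv and its pushforward under Ξ is bounded by C·d, where C depends only on ρ, M, and c. -/
open MeasureTheory NNReal ENNReal Pointwise

section aux_helpers

/-- A Lipschitz map on a Euclidean space maps null sets to null sets. -/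
lemma aux_lipschitz_image_null {M : ℕ} {K : ℝ≥0}
    {f : EuclideanSpace ℝ (Fin M) → EuclideanSpace ℝ (Fin M)} (hf : LipschitzWith K f)
    {s : Set (EuclideanSpace ℝ (Fin M))} (hs : volume s = 0) : volume (f '' s) = 0 := by
  set ν : Measure (EuclideanSpace ℝ (Fin M)) :=
    μH[(Module.finrank ℝ (EuclideanSpace ℝ (Fin M)) : ℝ)] with hν
  haveI hinst : ν.IsAddHaarMeasure := isAddHaarMeasure_hausdorffMeasure
  have hsmul : (volume : Measure (EuclideanSpace ℝ (Fin M)))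
      = Measure.addHaarScalarFactor (volume : Measure (EuclideanSpace ℝ (Fin M))) ν • ν :=
    Measure.isAddLeftInvariant_eq_smul _ _
  have hc : (0:ℝ≥0) < Measure.addHaarScalarFactor (volume : Measure (EuclideanSpace ℝ (Fin M))) ν :=
    Measure.addHaarScalarFactor_pos_of_isAddHaarMeasure _ _
  have hν0 : ν s = 0 := by
    rw [hsmul] at hs
    simp only [Measure.smul_apply, smul_eq_mul] at hs
    rcases mul_eq_zero.1 hs with h | h
    · exact absurd h (by simp [hc.ne'])
    · exact h
  have himg : ν (f '' s) = 0 := by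
    have h := hf.hausdorffMeasure_image_le
      (show (0:ℝ) ≤ (Module.finrank ℝ (EuclideanSpace ℝ (Fin M)) : ℝ) by positivity) s
    refine le_antisymm (le_trans h ?_) zero_le
    rw [← hν, hν0, mul_zero]
  rw [hsmul]
  simp only [Measure.smul_apply, smul_eq_mul, himg, mul_zero, smul_zero]

/-- The determinant is a smooth function on continuous endomorphisms of a
finite-dimensional space. -/
lemma aux_contDiff_det (F : Type*) [NormedAddCommGroup F] [NormedSpace ℝ F]
    [FiniteDimensional ℝ F] :
    ContDiff ℝ 1 (fun B : F →L[ℝ] F => B.det) := by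
  classical
  let b := Module.finBasis ℝ F
  have eq : (fun B : F →L[ℝ] F => B.det)
      = fun B => ∑ σ : Equiv.Perm (Fin (Module.finrank ℝ F)),
          ((Equiv.Perm.sign σ : ℤ) : ℝ) * ∏ i, b.repr (B (b i)) (σ i) := by
    funext B
    have h0 : B.det = LinearMap.det (B : F →ₗ[ℝ] F) := rfl
    rw [h0, ← LinearMap.det_toMatrix b, Matrix.det_apply']
    refine Finset.sum_congr rfl fun σ _ => ?_
    congr 1
    refine Finset.prod_congr rfl fun i _ => ?_
    rw [LinearMap.toMatrix_apply]
    rfl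
  rw [eq]
  refine ContDiff.sum fun σ _ => ContDiff.mul contDiff_const ?_
  refine contDiff_prod fun i _ => ?_
  have h1 : ContDiff ℝ 1 fun B : F →L[ℝ] F => B (b i) :=
    (ContinuousLinearMap.apply ℝ F (b i)).contDiff
  have h2 : ContDiff ℝ 1 fun v : F => b.repr v (σ i) := by
    have := (LinearMap.toContinuousLinearMap
      ((Finsupp.lapply (σ i)).comp (b.repr.toLinearMap))).contDiff (𝕜 := ℝ) (n := 1)
    simpa [Function.comp_def] using this
  exact h2.comp h1

/-- Near the identity, the determinant is Lipschitz: there is a constant `K` with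
`|det(1+B) - 1| ≤ K ‖B‖` whenever `‖B‖ ≤ 1/2`. -/
lemma aux_det_bound (F : Type*) [NormedAddCommGroup F] [NormedSpace ℝ F]
    [FiniteDimensional ℝ F] :
    ∃ K : ℝ, 0 ≤ K ∧ ∀ B : F →L[ℝ] F, ‖B‖ ≤ 1/2 →
      |(ContinuousLinearMap.id ℝ F + B).det - 1| ≤ K * ‖B‖ := by
  classical
  have hg : ContDiff ℝ 1 (fun B : F →L[ℝ] F => (ContinuousLinearMap.id ℝ F + B).det) :=
    (aux_contDiff_det F).comp (contDiff_const.add contDiff_id)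
  obtain ⟨K0, hK0⟩ := (isCompact_closedBall (0 : F →L[ℝ] F) 1).exists_bound_of_continuousOn
    ((hg.continuous_fderiv one_ne_zero).continuousOn)
  set K : ℝ≥0 := ⟨max K0 0, le_max_right _ _⟩ with hK
  have hlip : LipschitzOnWith K (fun B : F →L[ℝ] F => (ContinuousLinearMap.id ℝ F + B).det)
      (Metric.closedBall 0 1) := by
    apply Convex.lipschitzOnWith_of_nnnorm_fderiv_le
      (fun x _ => (hg.differentiable one_ne_zero).differentiableAt)
      (fun x hx => ?_) (convex_closedBall _ _)
    rw [← NNReal.coe_le_coe, coe_nnnorm]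
    exact le_trans (hK0 x hx) (le_max_left _ _)
  refine ⟨K, K.coe_nonneg, fun B hB => ?_⟩
  have hB1 : B ∈ Metric.closedBall (0 : F →L[ℝ] F) 1 := by
    rw [Metric.mem_closedBall, dist_zero_right]; linarith
  have h0 : (0 : F →L[ℝ] F) ∈ Metric.closedBall (0 : F →L[ℝ] F) 1 :=
    Metric.mem_closedBall_self (by norm_num)
  have hid : (ContinuousLinearMap.id ℝ F).det = 1 := by
    rw [ContinuousLinearMap.det, ContinuousLinearMap.coe_id, LinearMap.det_id]
  have h := hlip.dist_le_mul B hB1 0 h0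
  simp only [add_zero, Real.dist_eq, dist_zero_right, hid] at h
  exact h

end aux_helpers

/-- for a compactly supported Lipschitz probability density `ρ` on
`ℝ^M`, the total variation distance between `ρ dv` and its pushforward under
`Ξ = id + Φ` is `≤ C·d`, where `Lip(Φ) ≤ min(1/2, c·d)` and `sup‖Φ‖ ≤ c·d`, with
`C` depending only on `ρ`, `M`, `c`. -/
theorem stmt_12 (M : ℕ) (ρ : EuclideanSpace ℝ (Fin M) → ℝ)
    (hρ_lip : ∃ Lρ : ℝ≥0, LipschitzWith Lρ ρ)
    (hρ_supp : HasCompactSupport ρ)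
    (hρ_nonneg : ∀ v, 0 ≤ ρ v)
    (hρ_prob : IsProbabilityMeasure
      (volume.withDensity fun v => ENNReal.ofReal (ρ v)))
    (c : ℝ) (hc : 0 < c) :
    ∃ C : ℝ, 0 < C ∧
      ∀ d : ℝ, 0 < d →
        ∀ Φ : EuclideanSpace ℝ (Fin M) → EuclideanSpace ℝ (Fin M),
          (∃ L : ℝ≥0, LipschitzWith L Φ ∧ (L : ℝ) ≤ 1 / 2 ∧ (L : ℝ) ≤ c * d) →
          (∀ v, ‖Φ v‖ ≤ c * d) →
          ∀ A : Set (EuclideanSpace ℝ (Fin M)), MeasurableSet A →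
            |((volume.withDensity fun v => ENNReal.ofReal (ρ v)) A).toReal -
              (((volume.withDensity fun v => ENNReal.ofReal (ρ v)).map
                (fun v => v + Φ v)) A).toReal| ≤ C * d := by
  classical
  obtain ⟨Lρ, hρL⟩ := hρ_lip
  set μ : Measure (EuclideanSpace ℝ (Fin M)) :=
    volume.withDensity fun v => ENNReal.ofReal (ρ v) with hμ
  haveI : IsProbabilityMeasure μ := hρ_prob
  have hρcont : Continuous ρ := hρL.continuous
  obtain ⟨v₀, hv₀⟩ := hρcont.exists_forall_ge_of_hasCompactSupport hρ_supp
  set Bρ : ℝ := ρ v₀ with hBρ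
  have hBρ0 : 0 ≤ Bρ := hρ_nonneg v₀
  set Kc : Set (EuclideanSpace ℝ (Fin M)) := tsupport ρ + Metric.closedBall (0 : EuclideanSpace ℝ (Fin M)) 1 with hKc
  have hKcomp : IsCompact Kc := IsCompact.add hρ_supp (isCompact_closedBall _ 1)
  have hKmeas : MeasurableSet Kc := hKcomp.isClosed.measurableSet
  set Vr : ℝ := (volume Kc).toReal with hVr
  have hVr0 : 0 ≤ Vr := ENNReal.toReal_nonneg
  have hVfin : volume Kc ≠ ⊤ := hKcomp.measure_lt_top.ne
  obtain ⟨K, hK0, hKdet⟩ := aux_det_bound (EuclideanSpace ℝ (Fin M))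
  have hLρ0 : (0:ℝ) ≤ Lρ := Lρ.coe_nonneg
  set β : ℝ := (K * Bρ + (1 + K) * (Lρ : ℝ)) * c with hβ
  have hβ0 : 0 ≤ β := by positivity
  refine ⟨c + β * Vr + 1, by positivity, ?_⟩
  intro d hd Φ hΦlip hΦb A hA
  obtain ⟨L, hL, hL2, hLcd⟩ := hΦlip
  set Ξ : EuclideanSpace ℝ (Fin M) → EuclideanSpace ℝ (Fin M) := fun v => v + Φ v with hΞ
  have hΞlip : LipschitzWith (1 + L) Ξ := LipschitzWith.add (LipschitzWith.id) hL
  have hΞcont : Continuous Ξ := hΞlip.continuous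
  have hΞmeas : Measurable Ξ := hΞcont.measurable
  haveI : IsProbabilityMeasure (μ.map Ξ) := Measure.isProbabilityMeasure_map hΞmeas.aemeasurable
  have ha1 : μ A ≤ 1 := prob_le_one
  have hb1 : μ.map Ξ A ≤ 1 := prob_le_one
  have hane : μ A ≠ ⊤ := (lt_of_le_of_lt ha1 ENNReal.one_lt_top).ne
  have hbne : μ.map Ξ A ≠ ⊤ := (lt_of_le_of_lt hb1 ENNReal.one_lt_top).ne
  have haR : (μ A).toReal ≤ 1 := by
    simpa using ENNReal.toReal_mono ENNReal.one_ne_top ha1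
  have hbR : (μ.map Ξ A).toReal ≤ 1 := by
    simpa using ENNReal.toReal_mono ENNReal.one_ne_top hb1
  have haR0 : 0 ≤ (μ A).toReal := ENNReal.toReal_nonneg
  have hbR0 : 0 ≤ (μ.map Ξ A).toReal := ENNReal.toReal_nonneg
  by_cases hcd : c * d ≤ 1
  swap
  · -- trivial regime `c * d > 1`
    push_neg at hcd
    have h1 : |(μ A).toReal - (μ.map Ξ A).toReal| ≤ 1 := by
      rw [abs_sub_le_iff]; constructor <;> linarith
    have hexp : (c + β * Vr + 1) * d = c * d + β * Vr * d + d := by ring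
    have h3 : 0 ≤ β * Vr * d := by positivity
    have h2 : (1:ℝ) ≤ (c + β * Vr + 1) * d := by rw [hexp]; linarith
    linarith
  -- main regime `c * d ≤ 1`
  have hcd0 : 0 ≤ c * d := le_of_lt (mul_pos hc hd)
  -- Ξ is injective
  have hΞinj : Function.Injective Ξ := by
    intro x y hxy
    have h2 : x - y = Φ y - Φ x := by
      rw [sub_eq_sub_iff_add_eq_add]
      have h := hxy
      simp only [hΞ] at h
      rw [h]; abel
    have h3 : ‖x - y‖ ≤ (1/2) * ‖x - y‖ := by
      calc ‖x - y‖ = ‖Φ y - Φ x‖ := by rw [h2]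
      _ ≤ (L : ℝ) * ‖y - x‖ := by
            simpa [dist_eq_norm] using hL.dist_le_mul y x
      _ = (L : ℝ) * ‖x - y‖ := by rw [norm_sub_rev]
      _ ≤ (1/2) * ‖x - y‖ := mul_le_mul_of_nonneg_right hL2 (norm_nonneg _)
    have h4 : ‖x - y‖ ≤ 0 := by linarith
    have h5 : x - y = 0 := norm_eq_zero.1 (le_antisymm h4 (norm_nonneg _))
    exact sub_eq_zero.1 h5
  -- Ξ is surjective
  have hΞsurj : Function.Surjective Ξ := by
    intro y
    have hg : LipschitzWith L fun v => y - Φ v := by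
      have := (LipschitzWith.const (α := EuclideanSpace ℝ (Fin M)) y).sub hL
      simpa using this
    have hL1 : L < 1 := by
      rw [← NNReal.coe_lt_coe]
      push_cast
      linarith
    have hcontr : ContractingWith L fun v => y - Φ v := ⟨hL1, hg⟩
    obtain ⟨v, hv, -⟩ := hcontr.exists_fixedPoint y (edist_ne_top _ _)
    have hv' : y - Φ v = v := hv
    exact ⟨v, (sub_eq_iff_eq_add.1 hv').symm⟩
  -- differentiability set
  set s : Set (EuclideanSpace ℝ (Fin M)) := {x | DifferentiableAt ℝ Φ x} with hs
  have hsm : MeasurableSet s := measurableSet_of_differentiableAt ℝ Φ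
  have hsae : volume sᶜ = 0 := by
    have h := hL.ae_differentiableAt (μ := volume)
    rw [ae_iff] at h
    simpa [hs, Set.compl_setOf] using h
  set f' : EuclideanSpace ℝ (Fin M) →
      (EuclideanSpace ℝ (Fin M) →L[ℝ] EuclideanSpace ℝ (Fin M)) :=
    fun x => ContinuousLinearMap.id ℝ (EuclideanSpace ℝ (Fin M)) + fderiv ℝ Φ x with hf'
  have hder : ∀ x ∈ s, HasFDerivAt Ξ (f' x) x := by
    intro x hx
    exact (hasFDerivAt_id x).add hx.hasFDerivAt
  set T : Set (EuclideanSpace ℝ (Fin M)) := s ∩ Ξ ⁻¹' A with hT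
  have hTm : MeasurableSet T := hsm.inter (hΞmeas hA)
  have hderT : ∀ x ∈ T, HasFDerivWithinAt Ξ (f' x) T x := fun x hx =>
    (hder x hx.1).hasFDerivWithinAt
  have hinjT : Set.InjOn Ξ T := hΞinj.injOn
  have key := lintegral_image_eq_lintegral_abs_det_fderiv_mul volume hTm hderT hinjT
      (fun v => ENNReal.ofReal (ρ v))
  -- identification of μ A
  have hAeq : (Ξ '' T : Set (EuclideanSpace ℝ (Fin M))) =ᵐ[volume] A := by
    have hsub : Ξ '' T ⊆ A := by
      rintro _ ⟨x, ⟨_, hxA⟩, rfl⟩; exact hxA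
    have hnull : volume (A \ Ξ '' T) = 0 := by
      apply measure_mono_null _ (aux_lipschitz_image_null hΞlip hsae)
      rintro y ⟨hyA, hyn⟩
      obtain ⟨x, rfl⟩ := hΞsurj y
      exact ⟨x, fun hxs => hyn ⟨x, ⟨hxs, hyA⟩, rfl⟩, rfl⟩
    rw [MeasureTheory.ae_eq_set]
    constructor
    · rw [Set.diff_eq_empty.2 hsub]; exact measure_empty
    · exact hnull
  have hμA : μ A =
      ∫⁻ x in T, ENNReal.ofReal |(f' x).det| * ENNReal.ofReal (ρ (Ξ x)) ∂volume := by
    rw [hμ, withDensity_apply _ hA, ← setLIntegral_congr hAeq, key]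
  have hνA : μ.map Ξ A = ∫⁻ x in T, ENNReal.ofReal (ρ x) ∂volume := by
    rw [Measure.map_apply hΞmeas hA, hμ, withDensity_apply _ (hΞmeas hA)]
    apply setLIntegral_congr
    rw [MeasureTheory.ae_eq_set]
    constructor
    · apply measure_mono_null _ hsae
      rintro x ⟨hxA, hxT⟩
      exact fun hxs => hxT ⟨hxs, hxA⟩
    · have hemp : T \ Ξ ⁻¹' A = ∅ := Set.diff_eq_empty.2 (fun x hx => hx.2)
      rw [hemp]; exact measure_empty
  -- pointwise estimates
  have hfd : ∀ x ∈ s, ‖fderiv ℝ Φ x‖ ≤ (L : ℝ) := fun x _ =>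
    norm_fderiv_le_of_lipschitz ℝ hL
  have hdet1 : ∀ x ∈ s, |(f' x).det - 1| ≤ K * (L : ℝ) := by
    intro x hx
    have h1 : ‖fderiv ℝ Φ x‖ ≤ 1/2 := le_trans (hfd x hx) hL2
    calc |(f' x).det - 1| ≤ K * ‖fderiv ℝ Φ x‖ := hKdet (fderiv ℝ Φ x) h1
    _ ≤ K * (L : ℝ) := mul_le_mul_of_nonneg_left (hfd x hx) hK0
  have hρΞ : ∀ x, |ρ (Ξ x) - ρ x| ≤ (Lρ : ℝ) * (c * d) := by
    intro x
    have h := hρL.dist_le_mul (Ξ x) x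
    rw [Real.dist_eq, dist_eq_norm] at h
    have h2 : Ξ x - x = Φ x := by simp [hΞ]
    rw [h2] at h
    exact le_trans h (mul_le_mul_of_nonneg_left (hΦb x) hLρ0)
  have hKc_mem : ∀ x, (ρ x ≠ 0 ∨ ρ (Ξ x) ≠ 0) → x ∈ Kc := by
    intro x hx
    rcases hx with h | h
    · have hx1 : x ∈ tsupport ρ := subset_tsupport ρ (Function.mem_support.2 h)
      exact ⟨x, hx1, 0, Metric.mem_closedBall_self (by norm_num), by simp⟩
    · have hx1 : Ξ x ∈ tsupport ρ := subset_tsupport ρ (Function.mem_support.2 h)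
      refine ⟨Ξ x, hx1, -Φ x, ?_, ?_⟩
      · rw [mem_closedBall_zero_iff, norm_neg]
        exact le_trans (hΦb x) hcd
      · simp [hΞ]
  set ind : EuclideanSpace ℝ (Fin M) → ℝ≥0∞ :=
    Kc.indicator (fun _ => ENNReal.ofReal (β * d)) with hind
  have hptwise : ∀ x ∈ s,
      (ENNReal.ofReal |(f' x).det| * ENNReal.ofReal (ρ (Ξ x))
        ≤ ENNReal.ofReal (ρ x) + ind x)
      ∧ (ENNReal.ofReal (ρ x)
        ≤ ENNReal.ofReal |(f' x).det| * ENNReal.ofReal (ρ (Ξ x)) + ind x) := by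
    intro x hx
    by_cases hmem : x ∈ Kc
    · have hindx : ind x = ENNReal.ofReal (β * d) := Set.indicator_of_mem hmem _
      have hDdet := hdet1 x hx
      have hDabs : |(|(f' x).det| - 1)| ≤ K * (L : ℝ) := by
        have := abs_abs_sub_abs_le_abs_sub ((f' x).det) 1
        simp only [abs_one] at this
        exact le_trans this hDdet
      have hD : |(f' x).det| ≤ 1 + K * (L : ℝ) := by
        have := (abs_le.1 hDabs).2; linarith
      have hDlo : 1 - K * (L : ℝ) ≤ |(f' x).det| := by
        have := (abs_le.1 hDabs).1; linarith
      have hρx : ρ x ≤ Bρ := hv₀ x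
      have hρΞx : ρ (Ξ x) ≤ Bρ := hv₀ (Ξ x)
      have hρΞ0 : 0 ≤ ρ (Ξ x) := hρ_nonneg _
      have hρx0 : 0 ≤ ρ x := hρ_nonneg x
      have hKL : K * (L : ℝ) ≤ K * (c * d) := mul_le_mul_of_nonneg_left hLcd hK0
      have hKL1 : K * (L : ℝ) ≤ K := by
        calc K * (L : ℝ) ≤ K * 1 := mul_le_mul_of_nonneg_left (by linarith) hK0
        _ = K := mul_one K
      have hKL0 : 0 ≤ K * (L : ℝ) := mul_nonneg hK0 L.coe_nonneg
      have h1 : ρ (Ξ x) ≤ ρ x + (Lρ : ℝ) * (c * d) := by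
        have := (abs_le.1 (hρΞ x)).2; linarith
      have h2 : ρ x ≤ ρ (Ξ x) + (Lρ : ℝ) * (c * d) := by
        have := (abs_le.1 (hρΞ x)).1; linarith
      have habs0 : 0 ≤ |(f' x).det| := abs_nonneg _
      have hreal1 : |(f' x).det| * ρ (Ξ x) ≤ ρ x + β * d := by
        have e1 : |(f' x).det| * ρ (Ξ x) ≤ (1 + K * (L : ℝ)) * (ρ x + (Lρ : ℝ) * (c * d)) :=
          mul_le_mul hD h1 hρΞ0 (by linarith)
        have e2 : K * (L:ℝ) * ρ x ≤ K * (c * d) * Bρ :=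
          mul_le_mul hKL hρx hρx0 (mul_nonneg hK0 hcd0)
        have e3 : K * (L:ℝ) * ((Lρ : ℝ) * (c * d)) ≤ K * ((Lρ:ℝ) * (c * d)) :=
          mul_le_mul_of_nonneg_right hKL1 (mul_nonneg hLρ0 hcd0)
        have hβd : β * d = (K * Bρ + (1 + K) * (Lρ : ℝ)) * (c * d) := by rw [hβ]; ring
        linarith
      have hreal2 : ρ x ≤ |(f' x).det| * ρ (Ξ x) + β * d := by
        have ea : (1 - |(f' x).det|) * ρ (Ξ x) ≤ K * (L:ℝ) * ρ (Ξ x) :=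
          mul_le_mul_of_nonneg_right (by linarith) hρΞ0
        have eb : K * (L:ℝ) * ρ (Ξ x) ≤ K * (L:ℝ) * Bρ :=
          mul_le_mul_of_nonneg_left hρΞx hKL0
        have ec : K * (L:ℝ) * Bρ ≤ K * (c*d) * Bρ :=
          mul_le_mul_of_nonneg_right hKL hBρ0
        have hnn : (0:ℝ) ≤ K * ((Lρ:ℝ) * (c * d)) := by positivity
        have hβd : β * d = (K * Bρ + (1 + K) * (Lρ : ℝ)) * (c * d) := by rw [hβ]; ring
        linarith
      constructor
      · calc ENNReal.ofReal |(f' x).det| * ENNReal.ofReal (ρ (Ξ x))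
            = ENNReal.ofReal (|(f' x).det| * ρ (Ξ x)) := (ENNReal.ofReal_mul habs0).symm
        _ ≤ ENNReal.ofReal (ρ x + β * d) := ENNReal.ofReal_le_ofReal hreal1
        _ ≤ ENNReal.ofReal (ρ x) + ENNReal.ofReal (β * d) := ENNReal.ofReal_add_le
        _ = ENNReal.ofReal (ρ x) + ind x := by rw [hindx]
      · calc ENNReal.ofReal (ρ x)
            ≤ ENNReal.ofReal (|(f' x).det| * ρ (Ξ x) + β * d) := ENNReal.ofReal_le_ofReal hreal2
        _ ≤ ENNReal.ofReal (|(f' x).det| * ρ (Ξ x)) + ENNReal.ofReal (β * d) :=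
            ENNReal.ofReal_add_le
        _ = ENNReal.ofReal |(f' x).det| * ENNReal.ofReal (ρ (Ξ x)) + ind x := by
            rw [ENNReal.ofReal_mul habs0, hindx]
    · have hz : ρ x = 0 ∧ ρ (Ξ x) = 0 := by
        by_contra h
        push_neg at h
        rcases Classical.em (ρ x = 0) with h1 | h1
        · exact hmem (hKc_mem x (Or.inr (h h1)))
        · exact hmem (hKc_mem x (Or.inl h1))
      constructor
      · rw [hz.2]; simp
      · rw [hz.1]; simp
  -- integral estimates
  have hindint : ∫⁻ x in T, ind x ∂volume ≤ ENNReal.ofReal (β * d) * volume Kc := by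
    calc ∫⁻ x in T, ind x ∂volume ≤ ∫⁻ x, ind x ∂volume := setLIntegral_le_lintegral _ _
    _ = ∫⁻ x in Kc, ENNReal.ofReal (β * d) ∂volume := lintegral_indicator hKmeas _
    _ = ENNReal.ofReal (β * d) * volume Kc := setLIntegral_const _ _
  have hmeasρ : Measurable fun x => ENNReal.ofReal (ρ x) :=
    ENNReal.measurable_ofReal.comp hρcont.measurable
  have hmeasind : Measurable ind := measurable_const.indicator hKmeas
  have hmeasdet : Measurable fun x => ENNReal.ofReal |(f' x).det| := by
    have h1 : Measurable fun x => fderiv ℝ Φ x := measurable_fderiv ℝ Φ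
    have h2 : Continuous fun B : EuclideanSpace ℝ (Fin M) →L[ℝ] EuclideanSpace ℝ (Fin M) =>
        (ContinuousLinearMap.id ℝ (EuclideanSpace ℝ (Fin M)) + B).det :=
      (aux_contDiff_det _).continuous.comp (continuous_const.add continuous_id)
    exact ENNReal.measurable_ofReal.comp ((h2.measurable.comp h1).abs)
  have hmeasF : Measurable fun x =>
      ENNReal.ofReal |(f' x).det| * ENNReal.ofReal (ρ (Ξ x)) :=
    hmeasdet.mul (ENNReal.measurable_ofReal.comp (hρcont.measurable.comp hΞmeas))
  have hIle : μ A ≤ μ.map Ξ A + ENNReal.ofReal (β * d) * volume Kc := by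
    rw [hμA, hνA]
    calc ∫⁻ x in T, ENNReal.ofReal |(f' x).det| * ENNReal.ofReal (ρ (Ξ x)) ∂volume
        ≤ ∫⁻ x in T, (ENNReal.ofReal (ρ x) + ind x) ∂volume :=
          setLIntegral_mono (hmeasρ.add hmeasind) (fun x hx => (hptwise x hx.1).1)
    _ = (∫⁻ x in T, ENNReal.ofReal (ρ x) ∂volume) + ∫⁻ x in T, ind x ∂volume :=
          lintegral_add_left hmeasρ _
    _ ≤ (∫⁻ x in T, ENNReal.ofReal (ρ x) ∂volume) + ENNReal.ofReal (β * d) * volume Kc :=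
          add_le_add_right hindint _
  have hIge : μ.map Ξ A ≤ μ A + ENNReal.ofReal (β * d) * volume Kc := by
    rw [hμA, hνA]
    calc ∫⁻ x in T, ENNReal.ofReal (ρ x) ∂volume
        ≤ ∫⁻ x in T, (ENNReal.ofReal |(f' x).det| * ENNReal.ofReal (ρ (Ξ x)) + ind x) ∂volume :=
          setLIntegral_mono (hmeasF.add hmeasind) (fun x hx => (hptwise x hx.1).2)
    _ = (∫⁻ x in T, ENNReal.ofReal |(f' x).det| * ENNReal.ofReal (ρ (Ξ x)) ∂volume)
          + ∫⁻ x in T, ind x ∂volume := lintegral_add_left hmeasF _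
    _ ≤ _ := add_le_add_right hindint _
  -- convert to reals
  have hεeq : ENNReal.ofReal (β * d) * volume Kc ≤ ENNReal.ofReal (β * d * Vr) := by
    have : volume Kc = ENNReal.ofReal Vr := (ENNReal.ofReal_toReal hVfin).symm
    rw [this, ← ENNReal.ofReal_mul (by positivity)]
  have hIle' : μ A ≤ μ.map Ξ A + ENNReal.ofReal (β * d * Vr) :=
    le_trans hIle (add_le_add_right hεeq _)
  have hIge' : μ.map Ξ A ≤ μ A + ENNReal.ofReal (β * d * Vr) :=
    le_trans hIge (add_le_add_right hεeq _)
  have he0 : (0:ℝ) ≤ β * d * Vr := by positivity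
  have h1 : (μ A).toReal ≤ (μ.map Ξ A).toReal + β * d * Vr := by
    have := ENNReal.toReal_mono
      (ENNReal.add_ne_top.2 ⟨hbne, ENNReal.ofReal_ne_top⟩) hIle'
    rwa [ENNReal.toReal_add hbne ENNReal.ofReal_ne_top, ENNReal.toReal_ofReal he0] at this
  have h2 : (μ.map Ξ A).toReal ≤ (μ A).toReal + β * d * Vr := by
    have := ENNReal.toReal_mono
      (ENNReal.add_ne_top.2 ⟨hane, ENNReal.ofReal_ne_top⟩) hIge'
    rwa [ENNReal.toReal_add hane ENNReal.ofReal_ne_top, ENNReal.toReal_ofReal he0] at this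
  have hfin : β * d * Vr ≤ (c + β * Vr + 1) * d := by
    have hexp2 : (c + β * Vr + 1) * d = β * d * Vr + c * d + d := by ring
    linarith
  rw [abs_sub_le_iff]
  constructor <;> linarith
end
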